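/- Let j ≥ 1 be an integer, ξ₁ > 0, and q continuous on [0, ξ₁] with 0 ≤ q(r) r² < j(j+1) for all r ∈ [0, ξ₁]. Suppose y is a C² solution of −(1/r²)(r² y')' + (j(j+1)/r²) y = q(r) y on (0, ξ₁) with y(r)/r^j → 1 as r → 0⁺ (in particular y is not identically zero and r² y y' → 0 at 0). Then the boundary condition ((j+1)/r) y + dy/dr = 0 at r = ξ₁ cannot hold. -/

import Mathlib

theorem stmt_13 (ξ₁ : ℝ) (hξ : 0 < ξ₁) (j : ℕ) (hj : 1 ≤ j)
    (q y : ℝ → ℝ) (hq : ContinuousOn q (Set.Icc 0 ξ₁))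
    (hqbound : ∀ r ∈ Set.Icc 0 ξ₁, 0 ≤ q r ∧ q r * r ^ 2 < (j : ℝ) * ((j : ℝ) + 1))
    (hy : ContDiffOn ℝ 2 y (Set.Ioc 0 ξ₁))
    (hode : ∀ r ∈ Set.Ioo 0 ξ₁,
      -(1 / r ^ 2) * deriv (fun s => s ^ 2 * deriv y s) r +
        ((j : ℝ) * ((j : ℝ) + 1) / r ^ 2) * y r = q r * y r)
    (hasym : Filter.Tendsto (fun r => y r / r ^ j)
      (nhdsWithin 0 (Set.Ioi 0)) (nhds 1))
    (hlim : Filter.Tendsto (fun r => r ^ 2 * y r * deriv y r)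
      (nhdsWithin 0 (Set.Ioi 0)) (nhds 0)) :
    ((j : ℝ) + 1) / ξ₁ * y ξ₁ + deriv y ξ₁ ≠ 0 := by
  intro hbc
  set s : Set ℝ := Set.Ioc 0 ξ₁ with hs
  have hus : UniqueDiffOn ℝ s := uniqueDiffOn_Ioc 0 ξ₁
  set w : ℝ → ℝ := fun r => derivWithin y s r with hw
  have hyc : ContinuousOn y s := hy.continuousOn
  have hwcd : ContDiffOn ℝ 1 w s := hy.derivWithin hus (by norm_num)
  have hwc : ContinuousOn w s := hwcd.continuousOn
  have hmemnhds : ∀ r ∈ Set.Ioo 0 ξ₁, s ∈ nhds r := by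
    intro r hr
    exact mem_nhds_iff.mpr ⟨Set.Ioo 0 ξ₁, Set.Ioo_subset_Ioc_self, isOpen_Ioo, hr⟩
  have hweq : ∀ r ∈ Set.Ioo 0 ξ₁, w r = deriv y r := fun r hr =>
    derivWithin_of_mem_nhds (hmemnhds r hr)
  set F : ℝ → ℝ := fun r => r ^ 2 * y r * w r with hF
  set g : ℝ → ℝ := fun r =>
    ((j : ℝ) * ((j : ℝ) + 1) - q r * r ^ 2) * (y r) ^ 2 + r ^ 2 * (deriv y r) ^ 2 with hg
  -- F has derivative g at interior points
  have hFd : ∀ r ∈ Set.Ioo 0 ξ₁, HasDerivAt F (g r) r := by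
    intro r hr
    have hr0 : (0 : ℝ) < r := hr.1
    have hIoo : Set.Ioo (0:ℝ) ξ₁ ∈ nhds r := isOpen_Ioo.mem_nhds hr
    have hyr : DifferentiableAt ℝ y r :=
      ((hy.differentiableOn (by norm_num)) r (Set.Ioo_subset_Ioc_self hr)).differentiableAt
        (hmemnhds r hr)
    have hwd : DifferentiableAt ℝ w r :=
      ((hwcd.differentiableOn (by norm_num)) r (Set.Ioo_subset_Ioc_self hr)).differentiableAt
        (hmemnhds r hr)
    have hev : w =ᶠ[nhds r] (fun x => deriv y x) := by
      filter_upwards [hIoo] with x hx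
      exact hweq x hx
    have hdyd : DifferentiableAt ℝ (fun x => deriv y x) r :=
      (Filter.EventuallyEq.differentiableAt_iff hev).mp hwd
    -- G x = x^2 * deriv y x
    have hGd : DifferentiableAt ℝ (fun x => x ^ 2 * deriv y x) r :=
      (differentiableAt_pow 2).mul hdyd
    have hG : HasDerivAt (fun x => x ^ 2 * deriv y x)
        (deriv (fun x => x ^ 2 * deriv y x) r) r := hGd.hasDerivAt
    have hyd : HasDerivAt y (deriv y r) r := hyr.hasDerivAt
    have hprod : HasDerivAt (fun x => (x ^ 2 * deriv y x) * y x)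
        (deriv (fun x => x ^ 2 * deriv y x) r * y r + (r ^ 2 * deriv y r) * deriv y r) r :=
      hG.mul hyd
    -- compute deriv G r from the ODE
    have hode' := hode r hr
    have hr2 : (r:ℝ) ^ 2 ≠ 0 := pow_ne_zero 2 (ne_of_gt hr0)
    generalize hDdef : deriv (fun x => x ^ 2 * deriv y x) r = D at hode' hprod
    have hGval : D = ((j : ℝ) * ((j : ℝ) + 1) - q r * r ^ 2) * y r := by
      field_simp at hode'
      have key : D * r ^ 2 = (((j : ℝ) * ((j : ℝ) + 1) - q r * r ^ 2) * y r) * r ^ 2 := by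
        linear_combination (-(r ^ 2) : ℝ) * hode'
      exact mul_right_cancel₀ hr2 key
    rw [hGval] at hprod
    have hFev : F =ᶠ[nhds r] (fun x => (x ^ 2 * deriv y x) * y x) := by
      filter_upwards [hIoo] with x hx
      simp only [hF, hweq x hx]; ring
    have : HasDerivAt F
        (((j : ℝ) * ((j : ℝ) + 1) - q r * r ^ 2) * y r * y r
          + (r ^ 2 * deriv y r) * deriv y r) r :=
      (Filter.EventuallyEq.hasDerivAt_iff hFev).mpr hprod
    convert this using 1
    simp only [hg]; ring
  -- g is nonnegative on the interior
  have hgnn : ∀ r ∈ Set.Ioo 0 ξ₁, 0 ≤ g r := by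
    intro r hr
    have hb := (hqbound r ⟨le_of_lt hr.1, le_of_lt hr.2⟩).2
    have h1 : 0 ≤ ((j : ℝ) * ((j : ℝ) + 1) - q r * r ^ 2) * (y r) ^ 2 :=
      mul_nonneg (by linarith) (sq_nonneg _)
    have h2 : 0 ≤ r ^ 2 * (deriv y r) ^ 2 := mul_nonneg (sq_nonneg _) (sq_nonneg _)
    simp only [hg]; linarith
  -- F is monotone on s
  have hFc : ContinuousOn F s := by
    exact ((continuous_pow 2).continuousOn.mul hyc).mul hwc
  have hFmono : MonotoneOn F s := by
    apply monotoneOn_of_deriv_nonneg (convex_Ioc 0 ξ₁) hFc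
    · intro x hx
      rw [interior_Ioc] at hx
      exact ((hFd x hx).differentiableAt).differentiableWithinAt
    · intro x hx
      rw [interior_Ioc] at hx
      rw [(hFd x hx).deriv]
      exact hgnn x hx
  -- F tends to 0 at 0⁺
  have hF0 : Filter.Tendsto F (nhdsWithin 0 (Set.Ioi 0)) (nhds 0) := by
    apply hlim.congr'
    filter_upwards [Ioo_mem_nhdsGT_of_mem (Set.mem_Ico.mpr ⟨le_refl (0:ℝ), hξ⟩)] with x hx
    simp only [hF, hweq x hx]
  -- F is nonnegative on s
  have hFnn : ∀ a ∈ s, 0 ≤ F a := by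
    intro a ha
    have hev : ∀ᶠ x in nhdsWithin 0 (Set.Ioi 0), F x ≤ F a := by
      filter_upwards [Ioo_mem_nhdsGT_of_mem (Set.mem_Ico.mpr ⟨le_refl (0:ℝ), ha.1⟩)] with x hx
      exact hFmono ⟨hx.1, le_trans (le_of_lt hx.2) ha.2⟩ ha (le_of_lt hx.2)
    exact le_of_tendsto hF0 hev
  -- F ξ₁ ≤ 0 from the boundary condition
  have hFxi : F ξ₁ ≤ 0 := by
    have hxis : ξ₁ ∈ s := Set.mem_Ioc.mpr ⟨hξ, le_refl _⟩
    by_cases hd : DifferentiableAt ℝ y ξ₁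
    · have hweqxi : w ξ₁ = deriv y ξ₁ := hd.derivWithin (hus ξ₁ hxis)
      have hdy : deriv y ξ₁ = -(((j : ℝ) + 1) / ξ₁ * y ξ₁) := by linarith
      simp only [hF, hweqxi, hdy]
      have hj1 : (0:ℝ) < (j : ℝ) + 1 := by positivity
      have : ξ₁ ^ 2 * y ξ₁ * -(((j:ℝ) + 1) / ξ₁ * y ξ₁)
          = -((((j:ℝ) + 1) * ξ₁) * (y ξ₁) ^ 2) := by
        field_simp
      rw [this]
      have : 0 ≤ (((j:ℝ) + 1) * ξ₁) * (y ξ₁) ^ 2 :=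
        mul_nonneg (by positivity) (sq_nonneg _)
      linarith
    · have h0 : deriv y ξ₁ = 0 := deriv_zero_of_not_differentiableAt hd
      have hyxi : y ξ₁ = 0 := by
        rw [h0, add_zero] at hbc
        have hne : ((j : ℝ) + 1) / ξ₁ ≠ 0 := by positivity
        exact (mul_eq_zero.mp hbc).resolve_left hne
      simp [hF, hyxi]
  -- hence F ≡ 0 on s
  have hFzero : ∀ a ∈ s, F a = 0 := by
    intro a ha
    have h1 : F a ≤ F ξ₁ := hFmono ha (Set.mem_Ioc.mpr ⟨hξ, le_refl _⟩) ha.2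
    have h2 : 0 ≤ F a := hFnn a ha
    linarith
  -- hence y ≡ 0 on the interior
  have hyzero : ∀ r ∈ Set.Ioo 0 ξ₁, y r = 0 := by
    intro r hr
    have hIoo : Set.Ioo (0:ℝ) ξ₁ ∈ nhds r := isOpen_Ioo.mem_nhds hr
    have hev : F =ᶠ[nhds r] (fun _ => (0:ℝ)) := by
      filter_upwards [hIoo] with x hx
      exact hFzero x (Set.Ioo_subset_Ioc_self hx)
    have h1 : HasDerivAt (fun _ : ℝ => (0:ℝ)) (g r) r :=
      (Filter.EventuallyEq.hasDerivAt_iff hev).mp (hFd r hr)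
    have h2 : g r = 0 := h1.unique (hasDerivAt_const r 0)
    have hb := (hqbound r ⟨le_of_lt hr.1, le_of_lt hr.2⟩).2
    have hco : 0 < (j : ℝ) * ((j : ℝ) + 1) - q r * r ^ 2 := by linarith
    have h3 : 0 ≤ r ^ 2 * (deriv y r) ^ 2 := mul_nonneg (sq_nonneg _) (sq_nonneg _)
    have h4 : ((j : ℝ) * ((j : ℝ) + 1) - q r * r ^ 2) * (y r) ^ 2 = 0 := by
      simp only [hg] at h2
      nlinarith [mul_nonneg (le_of_lt hco) (sq_nonneg (y r))]
    have h5 : (y r) ^ 2 = 0 := by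
      rcases mul_eq_zero.mp h4 with h | h
      · exact absurd h (ne_of_gt hco)
      · exact h
    exact pow_eq_zero_iff (by norm_num) |>.mp h5
  -- contradiction with the asymptotics
  have hzero : Filter.Tendsto (fun r => y r / r ^ j)
      (nhdsWithin 0 (Set.Ioi 0)) (nhds 0) := by
    apply Filter.Tendsto.congr' _ tendsto_const_nhds
    filter_upwards [Ioo_mem_nhdsGT_of_mem (Set.mem_Ico.mpr ⟨le_refl (0:ℝ), hξ⟩)] with x hx
    simp [hyzero x hx]
  exact one_ne_zero (tendsto_nhds_unique hasym hzero)
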